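/- arXiv:2406.11316 — 3 statements merged into one kernel-verified Lean document; each statement's English description precedes it below -/
import Mathlib

section
/- Let ξ be a real random variable with |ξ| ≤ B_ξ almost surely, E[ξ] = 0, and let y = g + ξ for a constant g with |g| ≤ B_g. Set B_y = B_g + B_ξ. If p is drawn uniformly from [-B_y, B_y] independently of ξ, and o = 1{p ≤ y}, then E[2·B_y·(o - 1/2)] = g. -/
open MeasureTheory Set

/-- Uniform-price unbiased valuation estimator: if the price `p` is drawn uniformly on
`[-B_y, B_y]` (with `B_y = B_g + B_ξ`) independently of the noise `ξ`, then
`E[2 B_y (o - 1/2)] = g`, where `o = 1{p ≤ g + ξ}`. -/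
theorem stmt0 {Ω : Type*} [MeasurableSpace Ω] (P : Measure Ω) [IsProbabilityMeasure P]
    (ξ : Ω → ℝ) (hξmeas : Measurable ξ)
    (Bξ Bg g : ℝ) (hBg : 0 ≤ Bg) (hBξ : 0 < Bξ)
    (hbound : ∀ᵐ ω ∂P, |ξ ω| ≤ Bξ)
    (hmean : ∫ ω, ξ ω ∂P = 0)
    (hg : |g| ≤ Bg) :
    ∫ q, 2 * (Bg + Bξ) * ((if q.1 ≤ g + ξ q.2 then (1 : ℝ) else 0) - 1 / 2)
        ∂(((ENNReal.ofReal (2 * (Bg + Bξ)))⁻¹ •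
            (volume.restrict (Icc (-(Bg + Bξ)) (Bg + Bξ)))).prod P) = g := by
  set B := Bg + Bξ with hBdef
  have hB : 0 < B := by simp only [hBdef]; linarith
  have h2B : 0 < 2 * B := by linarith
  set μ : Measure ℝ := (ENNReal.ofReal (2 * B))⁻¹ • (volume.restrict (Icc (-B) B)) with hμ
  have hμprob : IsProbabilityMeasure μ := by
    constructor
    rw [hμ, Measure.smul_apply, Measure.restrict_apply MeasurableSet.univ, Set.univ_inter,
      Real.volume_Icc, smul_eq_mul, show B - (-B) = 2 * B by ring]
    exact ENNReal.inv_mul_cancel (by simp [h2B, hB]) ENNReal.ofReal_ne_top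
  have hμIic : ∀ y : ℝ, |y| ≤ B → (μ (Iic y)).toReal = (y + B) / (2 * B) := by
    intro y hy
    obtain ⟨hy1, hy2⟩ := abs_le.mp hy
    have hset : Iic y ∩ Icc (-B) B = Icc (-B) y := by
      ext p
      simp only [mem_inter_iff, mem_Iic, mem_Icc]
      constructor
      · rintro ⟨h1, h2, h3⟩; exact ⟨h2, h1⟩
      · rintro ⟨h1, h2⟩; exact ⟨h2, h1, h2.trans hy2⟩
    rw [hμ, Measure.smul_apply, Measure.restrict_apply measurableSet_Iic, hset,
      Real.volume_Icc, smul_eq_mul, show y - (-B) = y + B by ring,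
      ENNReal.toReal_mul, ENNReal.toReal_inv, ENNReal.toReal_ofReal h2B.le,
      ENNReal.toReal_ofReal (by linarith)]
    field_simp
  set S : Set (ℝ × Ω) := {q | q.1 ≤ g + ξ q.2} with hS
  have hSmeas : MeasurableSet S :=
    measurableSet_le measurable_fst (measurable_const.add (hξmeas.comp measurable_snd))
  have hfeq : ∀ q : ℝ × Ω, 2 * B * ((if q.1 ≤ g + ξ q.2 then (1:ℝ) else 0) - 1/2)
      = 2 * B * S.indicator (fun _ => (1:ℝ)) q - B := by
    intro q
    by_cases h : q.1 ≤ g + ξ q.2 <;> simp [Set.indicator, hS, h] <;> ring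
  have hint : Integrable
      (fun q : ℝ × Ω => 2 * B * ((if q.1 ≤ g + ξ q.2 then (1:ℝ) else 0) - 1/2)) (μ.prod P) := by
    have : Integrable (fun q : ℝ × Ω => 2 * B * S.indicator (fun _ => (1:ℝ)) q - B) (μ.prod P) :=
      (((integrable_const (1:ℝ)).indicator hSmeas).const_mul _).sub (integrable_const B)
    exact this.congr (Filter.Eventually.of_forall fun q => (hfeq q).symm)
  rw [MeasureTheory.integral_prod_symm _ hint]
  have hξint : Integrable ξ P :=
    Integrable.mono' (integrable_const Bξ) hξmeas.aestronglyMeasurable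
      (hbound.mono fun ω h => by simpa using h)
  have hinner : ∀ᵐ ω ∂P,
      (∫ p, 2 * B * ((if p ≤ g + ξ ω then (1:ℝ) else 0) - 1/2) ∂μ) = g + ξ ω := by
    filter_upwards [hbound] with ω hω
    set y := g + ξ ω with hy
    have hyB : |y| ≤ B := by
      calc |y| ≤ |g| + |ξ ω| := abs_add_le _ _
      _ ≤ B := by simp only [hBdef]; linarith
    have h1 : (fun p : ℝ => 2 * B * ((if p ≤ y then (1:ℝ) else 0) - 1/2))
        = fun p => 2 * B * (Iic y).indicator (fun _ => (1:ℝ)) p - B := by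
      funext p
      by_cases h : p ≤ y <;> simp [Set.indicator, h] <;> ring
    rw [h1, integral_sub (((integrable_const (1:ℝ)).indicator measurableSet_Iic).const_mul _)
      (integrable_const B), integral_const_mul, integral_indicator_const (1:ℝ) measurableSet_Iic, measureReal_def, hμIic y hyB, integral_const, probReal_univ]
    simp only [ENNReal.toReal_one, smul_eq_mul, one_mul]
    field_simp
    ring
  rw [integral_congr_ae hinner, integral_add (integrable_const g) hξint, hmean, integral_const,
    probReal_univ]
  simp
end

section
/- Let (F_t) be a filtration and (y_t) adapted real random variables with y_t - E[y_t | F_{t-1}] ∈ [m, M] almost surely. Let ι_t ∈ {0,1} be F_{t-1}-measurable, N_t = Σ_{s ≤ t} ι_s, and Z_t = Σ_{s ≤ t} ι_s (y_s - E[y_s | F_{s-1}]). Then for any fixed x ∈ ℝ, the process M_t = exp(x·Z_t - x²(M - m)²·N_t/8) is a supermartingale with respect to (F_t). -/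
open MeasureTheory


lemma hoeffding_scalar (p : ℝ) (hp0 : 0 ≤ p) (hp1 : p ≤ 1) (h : ℝ) :
    (1 - p) * Real.exp (-h * p) + p * Real.exp (h * (1 - p)) ≤ Real.exp (h ^ 2 / 8) := by
  set D : ℝ → ℝ := fun t => (1 - p) + p * Real.exp t with hD
  have hDpos : ∀ t, 0 < D t := by
    intro t
    rcases lt_or_eq_of_le hp1 with hlt | heq
    · have : 0 < 1 - p := by linarith
      positivity
    · subst heq
      simp only [hD]
      have := Real.exp_pos t
      nlinarith
  set g : ℝ → ℝ := fun t => -t * p + Real.log (D t) - t ^ 2 / 8 with hg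
  set g1 : ℝ → ℝ := fun t => -p + p * Real.exp t / D t - t / 4 with hg1
  set g2 : ℝ → ℝ := fun t => p * (1 - p) * Real.exp t / (D t) ^ 2 - 1 / 4 with hg2
  clear_value D g g1 g2
  have hDderiv : ∀ t, HasDerivAt D (p * Real.exp t) t := by
    intro t
    rw [hD]
    simpa using ((Real.hasDerivAt_exp t).const_mul p).const_add (1 - p)
  have hgderiv : ∀ t, HasDerivAt g (g1 t) t := by
    intro t
    have h1 : HasDerivAt (fun t : ℝ => -t * p) (-p) t := by
      simpa using (hasDerivAt_id t).neg.mul_const p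
    have h2 : HasDerivAt (fun t => Real.log (D t)) (p * Real.exp t / D t) t :=
      (hDderiv t).log (hDpos t).ne'
    have h3 : HasDerivAt (fun t : ℝ => t ^ 2 / 8) (t / 4) t := by
      have := (hasDerivAt_pow 2 t).div_const 8
      exact this.congr_deriv (by norm_num; ring)
    rw [hg, hg1]
    exact ((h1.add (by simpa only [hD] using h2)).sub h3)
  have hg1deriv : ∀ t, HasDerivAt g1 (g2 t) t := by
    intro t
    have hnum : HasDerivAt (fun t => p * Real.exp t) (p * Real.exp t) t :=
      (Real.hasDerivAt_exp t).const_mul p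
    have hdiv : HasDerivAt (fun t => p * Real.exp t / D t)
        ((p * Real.exp t * D t - p * Real.exp t * (p * Real.exp t)) / (D t) ^ 2) t :=
      hnum.div (hDderiv t) (hDpos t).ne'
    have h4 : HasDerivAt (fun t : ℝ => t / 4) (1 / 4 : ℝ) t := by
      simpa using (hasDerivAt_id t).div_const 4
    rw [hg1, hg2]
    have := (hdiv.const_add (-p)).sub h4
    refine this.congr_deriv ?_
    have : p * Real.exp t * D t - p * Real.exp t * (p * Real.exp t)
        = p * (1 - p) * Real.exp t := by simp only [hD]; ring
    rw [this]
  have hg2le : ∀ t, g2 t ≤ 0 := by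
    intro t
    have hDt := hDpos t
    have hsq : 4 * (p * (1 - p) * Real.exp t) ≤ (D t) ^ 2 := by
      have := sq_nonneg ((1 - p) - p * Real.exp t)
      have he := Real.exp_pos t
      simp only [hD]; nlinarith
    rw [hg2, sub_nonpos, div_le_iff₀ (by positivity)]
    nlinarith [hsq]
  have hg1anti : Antitone g1 :=
    antitone_of_deriv_nonpos (fun t => (hg1deriv t).differentiableAt)
      (fun t => by rw [(hg1deriv t).deriv]; exact hg2le t)
  have hg10 : g1 0 = 0 := by
    simp only [hg1, hD, Real.exp_zero, mul_one]
    field_simp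
    ring
  have hgdiff : Differentiable ℝ g := fun t => (hgderiv t).differentiableAt
  have hgle : ∀ t, g t ≤ g 0 := by
    intro t
    rcases le_total t 0 with ht | ht
    · have : MonotoneOn g (Set.Iic 0) := by
        apply monotoneOn_of_deriv_nonneg (convex_Iic 0) hgdiff.continuous.continuousOn
          hgdiff.differentiableOn
        intro u hu
        rw [interior_Iic] at hu
        rw [(hgderiv u).deriv]
        have := hg1anti (le_of_lt hu)
        rw [hg10] at this
        linarith
      exact this ht Set.self_mem_Iic ht
    · have : AntitoneOn g (Set.Ici 0) := by
        apply antitoneOn_of_deriv_nonpos (convex_Ici 0) hgdiff.continuous.continuousOn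
          hgdiff.differentiableOn
        intro u hu
        rw [interior_Ici] at hu
        rw [(hgderiv u).deriv]
        have := hg1anti (le_of_lt hu)
        rw [hg10] at this
        linarith
      exact this Set.self_mem_Ici ht ht
  have hg0 : g 0 = 0 := by simp [hg, hD]
  have key := (hgle h).trans_eq hg0
  have hLHS : (1 - p) * Real.exp (-h * p) + p * Real.exp (h * (1 - p))
      = Real.exp (-h * p + Real.log (D h)) := by
    rw [Real.exp_add, Real.exp_log (hDpos h)]
    simp only [hD]
    rw [show h * (1 - p) = -h * p + h by ring, Real.exp_add]
    ring
  rw [hLHS]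
  apply Real.exp_le_exp.2
  have : -h * p + Real.log (D h) - h ^ 2 / 8 ≤ 0 := by rw [hg] at key; exact key
  linarith



lemma hoeffding_centered (m M x : ℝ) (hm : m ≤ 0) (hM : 0 ≤ M) (hmM : m < M) :
    (M * Real.exp (x * m) - m * Real.exp (x * M)) / (M - m)
      ≤ Real.exp (x ^ 2 * (M - m) ^ 2 / 8) := by
  have hpos : 0 < M - m := by linarith
  have key := hoeffding_scalar (-m / (M - m)) (div_nonneg (by linarith) hpos.le)
    (by rw [div_le_one hpos]; linarith) (x * (M - m))
  have e1 : -(x * (M - m)) * (-m / (M - m)) = x * m := by field_simp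
  have e2 : x * (M - m) * (1 - -m / (M - m)) = x * M := by field_simp; ring
  have e3 : (1 : ℝ) - -m / (M - m) = M / (M - m) := by field_simp; ring
  have e4 : (x * (M - m)) ^ 2 / 8 = x ^ 2 * (M - m) ^ 2 / 8 := by ring
  rw [e1, e2, e3, e4] at key
  calc (M * Real.exp (x * m) - m * Real.exp (x * M)) / (M - m)
      = M / (M - m) * Real.exp (x * m) + -m / (M - m) * Real.exp (x * M) := by ring
    _ ≤ _ := key

lemma cond_hoeffding {Ω : Type*} {m0 : MeasurableSpace Ω} (μ : Measure Ω)
    [IsProbabilityMeasure μ] {𝒢 : MeasurableSpace Ω} (h𝒢 : 𝒢 ≤ m0)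
    (d : Ω → ℝ) (hd_int : Integrable d μ) (m M x : ℝ)
    (hb : ∀ᵐ ω ∂μ, d ω ∈ Set.Icc m M) (hc : μ[d|𝒢] =ᵐ[μ] 0) :
    μ[fun ω => Real.exp (x * d ω)|𝒢]
      ≤ᵐ[μ] fun _ => Real.exp (x ^ 2 * (M - m) ^ 2 / 8) := by
  -- first: m ≤ 0 ≤ M
  have hint0 : ∫ ω, d ω ∂μ = 0 := by
    have h1 : ∫ ω, (μ[d|𝒢]) ω ∂μ = ∫ ω, d ω ∂μ := integral_condExp h𝒢
    rw [← h1, integral_congr_ae hc]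
    simp
  have hm0 : m ≤ 0 := by
    have : ∫ _ : Ω, m ∂μ ≤ ∫ ω, d ω ∂μ :=
      integral_mono_ae (integrable_const m) hd_int (hb.mono fun ω h => h.1)
    simpa [hint0] using this
  have hM0 : 0 ≤ M := by
    have : ∫ ω, d ω ∂μ ≤ ∫ _ : Ω, M ∂μ :=
      integral_mono_ae hd_int (integrable_const M) (hb.mono fun ω h => h.2)
    simpa [hint0] using this
  -- integrability of exp(x d)
  have hexp_meas : AEStronglyMeasurable[m0] (fun ω => Real.exp (x * d ω)) μ :=
    Real.continuous_exp.comp_aestronglyMeasurable (hd_int.aestronglyMeasurable.const_mul x)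
  have hexp_bdd : ∀ᵐ ω ∂μ, ‖Real.exp (x * d ω)‖ ≤ Real.exp (|x| * max |m| |M|) := by
    filter_upwards [hb] with ω hω
    rw [Real.norm_eq_abs, Real.abs_exp, Real.exp_le_exp]
    calc x * d ω ≤ |x * d ω| := le_abs_self _
      _ = |x| * |d ω| := abs_mul _ _
      _ ≤ |x| * max |m| |M| := by
          gcongr
          rw [abs_le]
          constructor
          · exact le_trans (neg_le_neg (le_max_left |m| |M|)) (by
              have := neg_abs_le m; linarith [hω.1])
          · exact le_trans hω.2 (le_trans (le_abs_self M) (le_max_right _ _))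
  have hexp_int : Integrable (fun ω => Real.exp (x * d ω)) μ :=
    Integrable.mono' (integrable_const _) hexp_meas hexp_bdd
  rcases eq_or_lt_of_le (le_trans hm0 hM0) with heq | hlt
  · -- m = M = 0, d = 0 a.e.
    have hm0' : m = 0 := by linarith
    have hM0' : M = 0 := by linarith
    have hd0 : d =ᵐ[μ] 0 := by
      filter_upwards [hb] with ω hω
      have h1 := hω.1; have h2 := hω.2
      simp only [Pi.zero_apply]
      linarith
    have : (fun ω => Real.exp (x * d ω)) =ᵐ[μ] fun _ => (1 : ℝ) := by
      filter_upwards [hd0] with ω hω; simp [hω]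
    calc μ[fun ω => Real.exp (x * d ω)|𝒢] =ᵐ[μ] μ[fun _ => (1:ℝ)|𝒢] := condExp_congr_ae this
      _ =ᵐ[μ] fun _ => (1:ℝ) := by rw [condExp_const h𝒢]
      _ ≤ᵐ[μ] fun _ => Real.exp (x ^ 2 * (M - m) ^ 2 / 8) := by
          refine Filter.Eventually.of_forall fun ω => ?_
          have : (0:ℝ) ≤ x ^ 2 * (M - m) ^ 2 / 8 := by positivity
          calc (1:ℝ) = Real.exp 0 := Real.exp_zero.symm
            _ ≤ _ := Real.exp_le_exp.2 this
  · -- m < M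
    set c2 : ℝ := (Real.exp (x * M) - Real.exp (x * m)) / (M - m) with hc2
    set c1 : ℝ := (M * Real.exp (x * m) - m * Real.exp (x * M)) / (M - m) with hc1
    have hpos : 0 < M - m := by linarith
    have hptwise : ∀ᵐ ω ∂μ, Real.exp (x * d ω) ≤ c1 + c2 * d ω := by
      filter_upwards [hb] with ω hω
      have ha : 0 ≤ (M - d ω) / (M - m) := by
        apply div_nonneg _ hpos.le; linarith [hω.2]
      have hb' : 0 ≤ (d ω - m) / (M - m) := by
        apply div_nonneg _ hpos.le; linarith [hω.1]
      have hab : (M - d ω) / (M - m) + (d ω - m) / (M - m) = 1 := by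
        field_simp
        ring
      have hconv := convexOn_exp.2 (Set.mem_univ (x * m)) (Set.mem_univ (x * M)) ha hb' hab
      simp only [smul_eq_mul] at hconv
      have harg : (M - d ω) / (M - m) * (x * m) + (d ω - m) / (M - m) * (x * M) = x * d ω := by
        field_simp; ring
      rw [harg] at hconv
      refine hconv.trans_eq ?_
      rw [hc1, hc2]
      field_simp
      ring
    have hlin_int : Integrable (fun ω => c1 + c2 * d ω) μ :=
      (integrable_const c1).add (hd_int.const_mul c2)
    have step1 : μ[fun ω => Real.exp (x * d ω)|𝒢] ≤ᵐ[μ] μ[fun ω => c1 + c2 * d ω|𝒢] :=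
      condExp_mono hexp_int hlin_int hptwise
    have step2 : μ[fun ω => c1 + c2 * d ω|𝒢] =ᵐ[μ] fun _ => c1 := by
      calc μ[fun ω => c1 + c2 * d ω|𝒢]
          =ᵐ[μ] μ[fun _ => c1|𝒢] + μ[fun ω => c2 * d ω|𝒢] :=
            condExp_add (integrable_const c1) (hd_int.const_mul c2) 𝒢
        _ =ᵐ[μ] fun _ => c1 := by
            have h1 : μ[fun _ => c1|𝒢] =ᵐ[μ] fun _ => c1 := by rw [condExp_const h𝒢]
            have h2 : μ[fun ω => c2 * d ω|𝒢] =ᵐ[μ] fun _ => (0:ℝ) := by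
              have := condExp_smul (μ := μ) (m := 𝒢) c2 d
              refine this.trans ?_
              filter_upwards [hc] with ω hω
              simp only [Pi.smul_apply, smul_eq_mul]
              simp [hω]
            filter_upwards [h1, h2] with ω h1 h2
            simp only [Pi.add_apply, h1, h2, add_zero]
    have step3 : c1 ≤ Real.exp (x ^ 2 * (M - m) ^ 2 / 8) :=
      hoeffding_centered m M x hm0 hM0 hlt
    calc μ[fun ω => Real.exp (x * d ω)|𝒢] ≤ᵐ[μ] μ[fun ω => c1 + c2 * d ω|𝒢] := step1
      _ =ᵐ[μ] fun _ => c1 := step2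
      _ ≤ᵐ[μ] fun _ => Real.exp (x ^ 2 * (M - m) ^ 2 / 8) :=
          Filter.Eventually.of_forall fun _ => step3



/-- Exponential supermartingale for optionally-sampled bounded martingale differences:
`M_t = exp(x Z_t - x² (M - m)² N_t / 8)` is a supermartingale. -/
theorem stmt5 {Ω : Type*} {m0 : MeasurableSpace Ω} (μ : Measure Ω) [IsProbabilityMeasure μ]
    (F : Filtration ℕ m0) (y ι : ℕ → Ω → ℝ) (m M : ℝ)
    (hy_adapted : ∀ s : ℕ, StronglyMeasurable[F (s + 1)] (y (s + 1)))
    (hy_int : ∀ s : ℕ, Integrable (y s) μ)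
    (hbound : ∀ s : ℕ, ∀ᵐ ω ∂μ,
      y (s + 1) ω - (μ[y (s + 1)|F s]) ω ∈ Set.Icc m M)
    (hι_meas : ∀ s : ℕ, StronglyMeasurable[F s] (ι (s + 1)))
    (hι_01 : ∀ (s : ℕ) (ω : Ω), ι (s + 1) ω = 0 ∨ ι (s + 1) ω = 1)
    (x : ℝ) :
    Supermartingale
      (fun t ω => Real.exp (x * (∑ s ∈ Finset.range t,
          ι (s + 1) ω * (y (s + 1) ω - (μ[y (s + 1)|F s]) ω))
        - x ^ 2 * (M - m) ^ 2 * (∑ s ∈ Finset.range t, ι (s + 1) ω) / 8)) F μ := by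
  set K : ℝ := x ^ 2 * (M - m) ^ 2 / 8 with hK
  have hK0 : 0 ≤ K := by positivity
  set C : ℝ := max |m| |M| with hC
  have hC0 : 0 ≤ C := le_trans (abs_nonneg m) (le_max_left _ _)
  set d : ℕ → Ω → ℝ := fun s ω => y (s + 1) ω - (μ[y (s + 1)|F s]) ω with hd
  set f : ℕ → Ω → ℝ := fun t ω => Real.exp (x * (∑ s ∈ Finset.range t,
      ι (s + 1) ω * d s ω) - x ^ 2 * (M - m) ^ 2 * (∑ s ∈ Finset.range t, ι (s + 1) ω) / 8)
    with hf
  -- basic facts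
  have hι0 : ∀ s ω, 0 ≤ ι (s + 1) ω := by
    intro s ω; rcases hι_01 s ω with h | h <;> rw [h] <;> norm_num
  have hι1 : ∀ s ω, ι (s + 1) ω ≤ 1 := by
    intro s ω; rcases hι_01 s ω with h | h <;> rw [h] <;> norm_num
  have hd_sm : ∀ s, StronglyMeasurable[F (s + 1)] (d s) := fun s =>
    (hy_adapted s).sub (stronglyMeasurable_condExp.mono (F.mono (Nat.le_succ s)))
  have hd_int : ∀ s, Integrable (d s) μ := fun s =>
    (hy_int (s + 1)).sub integrable_condExp
  have hd_bdd : ∀ᵐ ω ∂μ, ∀ s, |d s ω| ≤ C := by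
    rw [MeasureTheory.ae_all_iff]
    intro s
    filter_upwards [hbound s] with ω hω
    rw [abs_le]
    constructor
    · calc -C ≤ -|m| := by simp [hC]
        _ ≤ m := neg_abs_le m
        _ ≤ d s ω := hω.1
    · calc d s ω ≤ M := hω.2
        _ ≤ |M| := le_abs_self M
        _ ≤ C := le_max_right _ _
  -- adaptedness
  have hadp : ∀ t, StronglyMeasurable[F t] (f t) := by
    intro t
    rw [hf]
    have h1 : Measurable[F t] fun ω => ∑ s ∈ Finset.range t, ι (s + 1) ω * d s ω :=
      Finset.measurable_sum _ fun s hs =>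
        (((hι_meas s).mono (F.mono (Finset.mem_range.1 hs).le)).measurable).mul
          (((hd_sm s).mono (F.mono (Finset.mem_range.1 hs))).measurable)
    have h2 : Measurable[F t] fun ω => ∑ s ∈ Finset.range t, ι (s + 1) ω :=
      Finset.measurable_sum _ fun s hs =>
        ((hι_meas s).mono (F.mono (Finset.mem_range.1 hs).le)).measurable
    exact (((h1.const_mul x).sub
      ((h2.const_mul (x ^ 2 * (M - m) ^ 2)).div_const 8)).exp).stronglyMeasurable
  -- integrability
  have hfbound : ∀ t, ∀ᵐ ω ∂μ, ‖f t ω‖ ≤ Real.exp (|x| * C * t) := by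
    intro t
    filter_upwards [hd_bdd] with ω hω
    rw [hf]
    simp only [Real.norm_eq_abs, Real.abs_exp, Real.exp_le_exp]
    have hterm : ∀ s ∈ Finset.range t, |ι (s + 1) ω * d s ω| ≤ C := by
      intro s _
      rw [abs_mul]
      have h1 : |ι (s + 1) ω| ≤ 1 := by rw [abs_of_nonneg (hι0 s ω)]; exact hι1 s ω
      have h2 := hω s
      nlinarith [abs_nonneg (ι (s + 1) ω), abs_nonneg (d s ω)]
    have hS : |∑ s ∈ Finset.range t, ι (s + 1) ω * d s ω| ≤ C * t := by
      calc |∑ s ∈ Finset.range t, ι (s + 1) ω * d s ω|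
          ≤ ∑ s ∈ Finset.range t, |ι (s + 1) ω * d s ω| := Finset.abs_sum_le_sum_abs _ _
        _ ≤ ∑ _s ∈ Finset.range t, C := Finset.sum_le_sum hterm
        _ = C * t := by rw [Finset.sum_const, Finset.card_range, nsmul_eq_mul, mul_comm]
    have h1 : x * (∑ s ∈ Finset.range t, ι (s + 1) ω * d s ω) ≤ |x| * C * t := by
      calc x * (∑ s ∈ Finset.range t, ι (s + 1) ω * d s ω)
          ≤ |x * (∑ s ∈ Finset.range t, ι (s + 1) ω * d s ω)| := le_abs_self _
        _ = |x| * |∑ s ∈ Finset.range t, ι (s + 1) ω * d s ω| := abs_mul _ _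
        _ ≤ |x| * (C * t) := mul_le_mul_of_nonneg_left hS (abs_nonneg x)
        _ = |x| * C * t := (mul_assoc _ _ _).symm
    have h2 : 0 ≤ x ^ 2 * (M - m) ^ 2 * (∑ s ∈ Finset.range t, ι (s + 1) ω) / 8 := by
      have hS2 : 0 ≤ ∑ s ∈ Finset.range t, ι (s + 1) ω :=
        Finset.sum_nonneg fun s _ => hι0 s ω
      positivity
    linarith
  have hint : ∀ t, Integrable (f t) μ := fun t =>
    Integrable.mono' (integrable_const _)
      (((hadp t).mono (F.le t)).aestronglyMeasurable) (hfbound t)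
  -- the conditional expectation step
  have hle : ∀ t, μ[f (t + 1)|F t] ≤ᵐ[μ] f t := by
    intro t
    set G : Ω → ℝ := fun ω => Real.exp (x * (ι (t + 1) ω * d t ω) - K * ι (t + 1) ω) with hG
    have hsplit : f (t + 1) = fun ω => f t ω * G ω := by
      funext ω
      simp only [hf, hG]
      rw [← Real.exp_add]
      congr 1
      rw [Finset.sum_range_succ, Finset.sum_range_succ, hK]
      ring
    -- G is measurable (m0) and bounded
    have hG_sm : StronglyMeasurable G := by
      rw [hG]
      exact Real.continuous_exp.comp_stronglyMeasurable
        ((((hι_meas t).mono (F.le t)).mul ((hd_sm t).mono (F.le (t + 1)))).const_mul x |>.sub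
          (((hι_meas t).mono (F.le t)).const_mul K))
    have hG_bdd : ∀ᵐ ω ∂μ, ‖G ω‖ ≤ Real.exp (|x| * C) := by
      filter_upwards [hd_bdd] with ω hω
      rw [hG]
      simp only [Real.norm_eq_abs, Real.abs_exp, Real.exp_le_exp]
      have hι' : |ι (t + 1) ω| ≤ 1 := by rw [abs_of_nonneg (hι0 t ω)]; exact hι1 t ω
      have h1 : x * (ι (t + 1) ω * d t ω) ≤ |x| * C := by
        have e1 : x * (ι (t + 1) ω * d t ω) ≤ |x| * (|ι (t + 1) ω| * |d t ω|) := by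
          rw [← abs_mul, ← abs_mul]; exact le_abs_self _
        have e2 : |x| * (|ι (t + 1) ω| * |d t ω|) ≤ |x| * (1 * C) := by
          apply mul_le_mul_of_nonneg_left _ (abs_nonneg x)
          exact mul_le_mul hι' (hω t) (abs_nonneg _) zero_le_one
        linarith [e1, e2]
      have h2 : 0 ≤ K * ι (t + 1) ω := mul_nonneg hK0 (hι0 t ω)
      linarith
    have hG_int : Integrable G μ :=
      Integrable.mono' (integrable_const _) hG_sm.aestronglyMeasurable hG_bdd
    have hprod_int : Integrable (f t * G) μ := by
      have := hint (t + 1)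
      rw [hsplit] at this
      exact this
    have h1 : μ[f t * G|F t] =ᵐ[μ] f t * μ[G|F t] :=
      condExp_mul_of_stronglyMeasurable_left (hadp t) hprod_int hG_int
    -- split G = exp(-K ι) * exp(x ι d)
    set B : Ω → ℝ := fun ω => Real.exp (x * (ι (t + 1) ω * d t ω)) with hB
    set E : Ω → ℝ := fun ω => Real.exp (-(K * ι (t + 1) ω)) with hE
    have hGeq : G = E * B := by
      funext ω
      rw [hG, hB, hE]
      simp only [Pi.mul_apply]
      rw [← Real.exp_add]
      congr 1
      ring
    have hE_sm : StronglyMeasurable[F t] E :=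
      Real.continuous_exp.comp_stronglyMeasurable ((hι_meas t).const_mul K).neg
    have hB_sm : StronglyMeasurable B :=
      Real.continuous_exp.comp_stronglyMeasurable
        ((((hι_meas t).mono (F.le t)).mul ((hd_sm t).mono (F.le (t + 1)))).const_mul x)
    have hB_bdd : ∀ᵐ ω ∂μ, ‖B ω‖ ≤ Real.exp (|x| * C) := by
      filter_upwards [hd_bdd] with ω hω
      rw [hB]
      simp only [Real.norm_eq_abs, Real.abs_exp, Real.exp_le_exp]
      have hι' : |ι (t + 1) ω| ≤ 1 := by rw [abs_of_nonneg (hι0 t ω)]; exact hι1 t ω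
      have e1 : x * (ι (t + 1) ω * d t ω) ≤ |x| * (|ι (t + 1) ω| * |d t ω|) := by
        rw [← abs_mul, ← abs_mul]; exact le_abs_self _
      have e2 : |x| * (|ι (t + 1) ω| * |d t ω|) ≤ |x| * (1 * C) := by
        apply mul_le_mul_of_nonneg_left _ (abs_nonneg x)
        exact mul_le_mul hι' (hω t) (abs_nonneg _) zero_le_one
      linarith [e1, e2]
    have hB_int : Integrable B μ :=
      Integrable.mono' (integrable_const _) hB_sm.aestronglyMeasurable hB_bdd
    have hEB_int : Integrable (E * B) μ := by rw [← hGeq]; exact hG_int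
    have h2 : μ[E * B|F t] =ᵐ[μ] E * μ[B|F t] :=
      condExp_mul_of_stronglyMeasurable_left hE_sm hEB_int hB_int
    -- B = ι * exp(x d) + (1 - ι)
    set e : Ω → ℝ := fun ω => Real.exp (x * d t ω) with he
    have hBeq : B = fun ω => ι (t + 1) ω * e ω + (1 - ι (t + 1) ω) := by
      funext ω
      rcases hι_01 t ω with h | h <;> simp [hB, he, h]
    have he_sm : StronglyMeasurable e :=
      Real.continuous_exp.comp_stronglyMeasurable
        (((hd_sm t).mono (F.le (t + 1))).const_mul x)
    have he_bdd : ∀ᵐ ω ∂μ, ‖e ω‖ ≤ Real.exp (|x| * C) := by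
      filter_upwards [hd_bdd] with ω hω
      rw [he]
      simp only [Real.norm_eq_abs, Real.abs_exp, Real.exp_le_exp]
      calc x * d t ω ≤ |x * d t ω| := le_abs_self _
        _ = |x| * |d t ω| := abs_mul _ _
        _ ≤ |x| * C := by gcongr; exact hω t
    have he_int : Integrable e μ :=
      Integrable.mono' (integrable_const _) he_sm.aestronglyMeasurable he_bdd
    have hιe_int : Integrable (fun ω => ι (t + 1) ω * e ω) μ := by
      apply Integrable.mono' (integrable_const (Real.exp (|x| * C)))
        ((((hι_meas t).mono (F.le t)).mul he_sm).aestronglyMeasurable)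
      filter_upwards [he_bdd] with ω hω
      show ‖ι (t + 1) ω * e ω‖ ≤ Real.exp (|x| * C)
      simp only [Real.norm_eq_abs, abs_mul]
      rw [abs_of_nonneg (hι0 t ω)]
      rw [Real.norm_eq_abs] at hω
      nlinarith [hι0 t ω, hι1 t ω, abs_nonneg (e ω)]
    have hone_sub_int : Integrable (fun ω => 1 - ι (t + 1) ω) μ := by
      apply Integrable.mono' (integrable_const (1 : ℝ))
        (((stronglyMeasurable_const.sub (hι_meas t)).mono (F.le t)).aestronglyMeasurable)
      refine Filter.Eventually.of_forall fun ω => ?_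
      show ‖1 - ι (t + 1) ω‖ ≤ (1 : ℝ)
      simp only [Real.norm_eq_abs]
      rw [abs_of_nonneg (by linarith [hι1 t ω] : (0:ℝ) ≤ 1 - ι (t + 1) ω)]
      linarith [hι0 t ω]
    have hιe_cond : μ[fun ω => ι (t + 1) ω * e ω|F t]
        =ᵐ[μ] fun ω => ι (t + 1) ω * (μ[e|F t]) ω :=
      condExp_mul_of_stronglyMeasurable_left (hι_meas t) hιe_int he_int
    have hone_cond : μ[fun ω => 1 - ι (t + 1) ω|F t] =ᵐ[μ] fun ω => 1 - ι (t + 1) ω := by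
      rw [condExp_of_stronglyMeasurable (F.le t) (f := fun ω => 1 - ι (t + 1) ω)
        (stronglyMeasurable_const.sub (hι_meas t)) hone_sub_int]
    have hB_cond : μ[B|F t]
        =ᵐ[μ] fun ω => ι (t + 1) ω * (μ[e|F t]) ω + (1 - ι (t + 1) ω) := by
      rw [hBeq]
      calc μ[fun ω => ι (t + 1) ω * e ω + (1 - ι (t + 1) ω)|F t]
          =ᵐ[μ] μ[fun ω => ι (t + 1) ω * e ω|F t] + μ[fun ω => 1 - ι (t + 1) ω|F t] :=
            condExp_add hιe_int hone_sub_int (F t)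
        _ =ᵐ[μ] fun ω => ι (t + 1) ω * (μ[e|F t]) ω + (1 - ι (t + 1) ω) := by
            filter_upwards [hιe_cond, hone_cond] with ω hω1 hω2
            simp only [Pi.add_apply, hω1, hω2]
    -- centeredness
    have hc : μ[d t|F t] =ᵐ[μ] 0 := by
      have hsub : μ[d t|F t]
          =ᵐ[μ] μ[y (t + 1)|F t] - μ[μ[y (t + 1)|F t]|F t] := by
        rw [hd]
        exact condExp_sub (hy_int (t + 1)) integrable_condExp (F t)
      have hcc : μ[μ[y (t + 1)|F t]|F t] = μ[y (t + 1)|F t] :=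
        condExp_of_stronglyMeasurable (F.le t) stronglyMeasurable_condExp integrable_condExp
      filter_upwards [hsub] with ω hω
      rw [Pi.zero_apply, hω, hcc]
      simp
    have h5 : μ[e|F t] ≤ᵐ[μ] fun _ => Real.exp K := by
      have := cond_hoeffding μ (F.le t) (d t) (hd_int t) m M x (hbound t) hc
      rw [he, hK]
      exact this
    -- assemble
    rw [hsplit]
    calc μ[fun ω => f t ω * G ω|F t] =ᵐ[μ] f t * μ[G|F t] := h1
      _ ≤ᵐ[μ] f t := by
        have h2' : μ[G|F t] =ᵐ[μ] E * μ[B|F t] := by rw [hGeq]; exact h2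
        filter_upwards [h2', hB_cond, h5] with ω hω2 hωB hω5
        simp only [Pi.mul_apply]
        rw [hω2]
        simp only [Pi.mul_apply]
        rw [hωB]
        have hfpos : 0 ≤ f t ω := (Real.exp_pos _).le
        have hEpos : 0 ≤ E ω := (Real.exp_pos _).le
        have hbound_inner : E ω * (ι (t + 1) ω * (μ[e|F t]) ω + (1 - ι (t + 1) ω)) ≤ 1 := by
          have hstep : ι (t + 1) ω * (μ[e|F t]) ω + (1 - ι (t + 1) ω)
              ≤ ι (t + 1) ω * Real.exp K + (1 - ι (t + 1) ω) := by
            have := mul_le_mul_of_nonneg_left hω5 (hι0 t ω)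
            linarith
          calc E ω * (ι (t + 1) ω * (μ[e|F t]) ω + (1 - ι (t + 1) ω))
              ≤ E ω * (ι (t + 1) ω * Real.exp K + (1 - ι (t + 1) ω)) := by
                exact mul_le_mul_of_nonneg_left hstep hEpos
            _ = 1 := by
                rcases hι_01 t ω with h | h <;>
                  simp [hE, h, ← Real.exp_add]
        calc f t ω * (E ω * (ι (t + 1) ω * (μ[e|F t]) ω + (1 - ι (t + 1) ω)))
            ≤ f t ω * 1 := mul_le_mul_of_nonneg_left hbound_inner hfpos
          _ = f t ω := mul_one _
  exact supermartingale_nat hadp hint hle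
end

section
/- Let (F_t) be a filtration, (y_t) adapted with y_t - E[y_t | F_{t-1}] ∈ [m, M] a.s., ι_t ∈ {0,1} F_{t-1}-measurable, N_t = Σ_{s ≤ t} ι_s, and μ̂_t = (Σ_{s ≤ t} ι_s(y_s - E[y_s|F_{s-1}]))/N_t when N_t ≥ 1. Then for any t ∈ ℕ and α ∈ (0,1): P(N_t = 0 or |μ̂_t| ≤ (M - m)·√(log(1/α)/(2·N_t))) ≥ 1 - 2tα. -/
open MeasureTheory Real Finset


lemma hoeff_key (p : ℝ) (hp0 : 0 ≤ p) (hp1 : p ≤ 1) (x : ℝ) :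
    Real.log (1 - p + p * Real.exp x) ≤ p * x + x ^ 2 / 8 := by
  set φ : ℝ → ℝ := fun t => 1 - p + p * Real.exp t with hφ
  have hφpos : ∀ t, 0 < φ t := by
    intro t
    rcases eq_or_lt_of_le hp0 with h | h
    · simp [hφ, ← h]
    · have := Real.exp_pos t
      have : 0 < p * Real.exp t := by positivity
      simp only [hφ]; nlinarith
  set f : ℝ → ℝ := fun t => p * t + t ^ 2 / 8 - Real.log (φ t) with hf
  set f' : ℝ → ℝ := fun t => p + t / 4 - p * Real.exp t / φ t with hf'
  have hdφ : ∀ t, HasDerivAt φ (p * Real.exp t) t := by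
    intro t
    exact ((Real.hasDerivAt_exp t).const_mul p).const_add (1 - p)
  have hd1 : ∀ t, HasDerivAt f (f' t) t := by
    intro t
    have h1 : HasDerivAt (fun t => Real.log (φ t)) (p * Real.exp t / φ t) t :=
      (hdφ t).log (hφpos t).ne'
    have h2 : HasDerivAt (fun t => p * t + t ^ 2 / 8) (p + t * 2 / 8 * 1) t := by
      exact ((hasDerivAt_id t).const_mul p).add
        (((hasDerivAt_pow 2 t)).div_const 8) |>.congr_deriv (by ring)
    have := h2.sub h1
    exact this.congr_deriv (by simp only [hf']; ring)
  have hd2 : ∀ t, HasDerivAt f'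
      (1/4 - (p * Real.exp t * φ t - p * Real.exp t * (p * Real.exp t)) / φ t ^ 2) t := by
    intro t
    have h1 : HasDerivAt (fun t => p * Real.exp t) (p * Real.exp t) t :=
      (Real.hasDerivAt_exp t).const_mul p
    have h2 := (h1.div (hdφ t) (hφpos t).ne')
    have h3 : HasDerivAt (fun t => p + t / 4) (1/4) t := by
      simpa using ((hasDerivAt_id t).div_const 4).const_add p
    exact h3.sub h2
  have hd2' : ∀ t, 0 ≤ 1/4 - (p * Real.exp t * φ t - p * Real.exp t * (p * Real.exp t)) / φ t ^ 2 := by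
    intro t
    have h0 := hφpos t
    have hnum : p * Real.exp t * φ t - p * Real.exp t * (p * Real.exp t)
        = (p * Real.exp t) * (1 - p) := by simp [hφ]; ring
    rw [hnum, sub_nonneg, div_le_iff₀ (by positivity)]
    have : φ t = (1 - p) + p * Real.exp t := by simp [hφ]
    nlinarith [Real.exp_pos t, sq_nonneg ((1-p) - p * Real.exp t)]
  have hmono' : Monotone f' := by
    apply monotone_of_deriv_nonneg
    · exact fun t => (hd2 t).differentiableAt
    · intro t; rw [(hd2 t).deriv]; exact hd2' t
  have hf'0 : f' 0 = 0 := by simp [hf', hφ]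
  have hf0 : f 0 = 0 := by simp [hf, hφ]
  have key : 0 ≤ f x := by
    rcases le_total 0 x with hx | hx
    · have hm : MonotoneOn f (Set.Ici 0) := by
        apply monotoneOn_of_deriv_nonneg (convex_Ici 0)
        · exact (Differentiable.continuous (fun t => (hd1 t).differentiableAt)).continuousOn
        · exact fun t _ => ((hd1 t).differentiableAt).differentiableWithinAt
        · intro t ht
          rw [(hd1 t).deriv]
          rw [interior_Ici, Set.mem_Ioi] at ht
          calc (0:ℝ) = f' 0 := hf'0.symm
            _ ≤ f' t := hmono' ht.le
      calc 0 = f 0 := hf0.symm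
        _ ≤ f x := hm (Set.self_mem_Ici) hx hx
    · have hm : AntitoneOn f (Set.Iic 0) := by
        apply antitoneOn_of_deriv_nonpos (convex_Iic 0)
        · exact (Differentiable.continuous (fun t => (hd1 t).differentiableAt)).continuousOn
        · exact fun t _ => ((hd1 t).differentiableAt).differentiableWithinAt
        · intro t ht
          rw [(hd1 t).deriv]
          rw [interior_Iic, Set.mem_Iio] at ht
          calc f' t ≤ f' 0 := hmono' ht.le
            _ = 0 := hf'0
      calc 0 = f 0 := hf0.symm
        _ ≤ f x := hm hx (Set.self_mem_Iic) hx
  have := key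
  simp only [hf] at this
  linarith [this]
lemma hoeff_mgf (m M l : ℝ) (hm : m ≤ 0) (hM : 0 ≤ M) (hlt : m < M) :
    (M * Real.exp (l * m) - m * Real.exp (l * M)) / (M - m)
      ≤ Real.exp (l ^ 2 * (M - m) ^ 2 / 8) := by
  have hMm : 0 < M - m := sub_pos.2 hlt
  set p := -m / (M - m) with hp
  have hp0 : 0 ≤ p := div_nonneg (by linarith) hMm.le
  have hp1 : p ≤ 1 := by rw [div_le_one hMm]; linarith
  set x := l * (M - m) with hx
  have hE : 0 < 1 - p + p * Real.exp x := by
    rcases eq_or_lt_of_le hp0 with h | h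
    · simp [← h]
    · nlinarith [Real.exp_pos x, mul_pos h (Real.exp_pos x)]
  have heq : (M * Real.exp (l * m) - m * Real.exp (l * M)) / (M - m)
      = Real.exp (l * m) * (1 - p + p * Real.exp x) := by
    rw [show l * M = l * m + x by rw [hx]; ring, Real.exp_add]
    rw [hp]
    field_simp [hp]
    ring
  rw [heq]
  have h1 : 1 - p + p * Real.exp x ≤ Real.exp (p * x + x ^ 2 / 8) := by
    calc 1 - p + p * Real.exp x = Real.exp (Real.log (1 - p + p * Real.exp x)) :=
          (Real.exp_log hE).symm
      _ ≤ _ := Real.exp_le_exp.2 (hoeff_key p hp0 hp1 x)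
  calc Real.exp (l * m) * (1 - p + p * Real.exp x)
      ≤ Real.exp (l * m) * Real.exp (p * x + x ^ 2 / 8) := by
        exact mul_le_mul_of_nonneg_left h1 (Real.exp_pos _).le
    _ = Real.exp (l * m + (p * x + x ^ 2 / 8)) := (Real.exp_add _ _).symm
    _ = Real.exp (l ^ 2 * (M - m) ^ 2 / 8) := by
        congr 1
        have : p * x = -m * l := by rw [hp, hx]; field_simp
        rw [this, hx]; ring
lemma exp_convex_bound (m M x l : ℝ) (hlt : m < M) (hx : x ∈ Set.Icc m M) :
    Real.exp (l * x) ≤ (M * Real.exp (l * m) - m * Real.exp (l * M)) / (M - m)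
      + (Real.exp (l * M) - Real.exp (l * m)) / (M - m) * x := by
  have hMm : 0 < M - m := sub_pos.2 hlt
  obtain ⟨h1, h2⟩ := hx
  have key := convexOn_exp.2 (Set.mem_univ (l * m)) (Set.mem_univ (l * M))
    (show (0:ℝ) ≤ (M - x) / (M - m) from div_nonneg (by linarith) hMm.le)
    (show (0:ℝ) ≤ (x - m) / (M - m) from div_nonneg (by linarith) hMm.le)
    (by field_simp; ring)
  simp only [smul_eq_mul] at key
  have harg : (M - x) / (M - m) * (l * m) + (x - m) / (M - m) * (l * M) = l * x := by
    field_simp; ring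
  rw [harg] at key
  calc Real.exp (l * x) ≤ (M - x) / (M - m) * Real.exp (l * m)
        + (x - m) / (M - m) * Real.exp (l * M) := key
    _ = _ := by field_simp; ring

/-- Conditional Hoeffding's lemma. -/
lemma cond_hoeff {Ω : Type*} {m0 : MeasurableSpace Ω} (μ : Measure Ω) [IsProbabilityMeasure μ]
    {G : MeasurableSpace Ω} (hG : G ≤ m0) {X : Ω → ℝ} (hX_int : Integrable X μ)
    (hX_cond : μ[X|G] =ᵐ[μ] 0) (m M l : ℝ) (hm : m ≤ 0) (hM : 0 ≤ M) (hlt : m < M)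
    (hbound : ∀ᵐ ω ∂μ, X ω ∈ Set.Icc m M) :
    μ[fun ω => Real.exp (l * X ω)|G] ≤ᵐ[μ] fun _ => Real.exp (l ^ 2 * (M - m) ^ 2 / 8) := by
  set a : ℝ := (M * Real.exp (l * m) - m * Real.exp (l * M)) / (M - m) with ha
  set b : ℝ := (Real.exp (l * M) - Real.exp (l * m)) / (M - m) with hb
  have hexp_int : Integrable (fun ω => Real.exp (l * X ω)) μ := by
    refine Integrable.mono' (integrable_const (Real.exp (|l| * max |m| |M|)))
      ?_ ?_
    · exact (Real.continuous_exp.comp (continuous_const.mul continuous_id)).comp_aestronglyMeasurable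
        hX_int.aestronglyMeasurable
    · filter_upwards [hbound] with ω hω
      rw [Real.norm_eq_abs, Real.abs_exp, Real.exp_le_exp]
      calc l * X ω ≤ |l * X ω| := le_abs_self _
        _ = |l| * |X ω| := abs_mul _ _
        _ ≤ |l| * max |m| |M| := by
            apply mul_le_mul_of_nonneg_left _ (abs_nonneg l)
            exact abs_le_max_abs_abs hω.1 hω.2
  have hab_int : Integrable (fun ω => a + b * X ω) μ :=
    (integrable_const a).add (hX_int.const_mul b)
  have hptwise : (fun ω => Real.exp (l * X ω)) ≤ᵐ[μ] fun ω => a + b * X ω := by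
    filter_upwards [hbound] with ω hω
    exact exp_convex_bound m M (X ω) l hlt hω
  have hmono := condExp_mono (m := G) hexp_int hab_int hptwise
  have hcalc : μ[fun ω => a + b * X ω|G] =ᵐ[μ] fun _ => a := by
    have h1 : μ[fun ω => a + b * X ω|G]
        =ᵐ[μ] μ[fun _ => a|G] + μ[fun ω => b * X ω|G] :=
      condExp_add (integrable_const a) (hX_int.const_mul b) G
    have h2 : μ[fun ω => b * X ω|G] =ᵐ[μ] fun ω => b * (μ[X|G]) ω := by
      exact condExp_smul (μ := μ) (m := G) b X
    filter_upwards [h1, h2, hX_cond] with ω hω1 hω2 hω3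
    simp only [Pi.add_apply, hω1, hω2, condExp_const hG]
    simp [hω3]
  have haM : a ≤ Real.exp (l ^ 2 * (M - m) ^ 2 / 8) := hoeff_mgf m M l hm hM hlt
  filter_upwards [hmono, hcalc] with ω h1 h2
  calc (μ[fun ω => Real.exp (l * X ω)|G]) ω ≤ (μ[fun ω => a + b * X ω|G]) ω := h1
    _ = a := h2
    _ ≤ _ := haM

section Supermart
variable {Ω : Type*} {m0 : MeasurableSpace Ω} (μ : Measure Ω) [IsProbabilityMeasure μ]
    (F : Filtration ℕ m0) (y ι : ℕ → Ω → ℝ) (m M : ℝ)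

lemma supermart
    (hy_adapted : ∀ s : ℕ, StronglyMeasurable[F (s + 1)] (y (s + 1)))
    (hy_int : ∀ s : ℕ, Integrable (y s) μ)
    (hbound : ∀ s : ℕ, ∀ᵐ ω ∂μ,
      y (s + 1) ω - (μ[y (s + 1)|F s]) ω ∈ Set.Icc m M)
    (hι_meas : ∀ s : ℕ, StronglyMeasurable[F s] (ι (s + 1)))
    (hι_01 : ∀ (s : ℕ) (ω : Ω), ι (s + 1) ω = 0 ∨ ι (s + 1) ω = 1)
    (hm : m ≤ 0) (hM : 0 ≤ M) (hlt : m < M) (l : ℝ) (t : ℕ) :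
    Integrable (fun ω => Real.exp (l * (∑ s ∈ Finset.range t,
          ι (s + 1) ω * (y (s + 1) ω - (μ[y (s + 1)|F s]) ω))
        - l ^ 2 * (M - m) ^ 2 / 8 * (∑ s ∈ Finset.range t, ι (s + 1) ω))) μ ∧
    ∫ ω, Real.exp (l * (∑ s ∈ Finset.range t,
          ι (s + 1) ω * (y (s + 1) ω - (μ[y (s + 1)|F s]) ω))
        - l ^ 2 * (M - m) ^ 2 / 8 * (∑ s ∈ Finset.range t, ι (s + 1) ω)) ∂μ ≤ 1 := by
  set c : ℝ := l ^ 2 * (M - m) ^ 2 / 8 with hc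
  have hc0 : 0 ≤ c := by positivity
  set X : ℕ → Ω → ℝ := fun s ω => y (s + 1) ω - (μ[y (s + 1)|F s]) ω with hX
  set W : ℕ → Ω → ℝ := fun t ω => Real.exp (l * (∑ s ∈ Finset.range t, ι (s + 1) ω * X s ω)
      - c * (∑ s ∈ Finset.range t, ι (s + 1) ω)) with hW
  -- measurability
  have hX_sm : ∀ s, StronglyMeasurable[F (s + 1)] (X s) := fun s =>
    (hy_adapted s).sub (stronglyMeasurable_condExp.mono (F.mono (Nat.le_succ s)))
  have hX_int : ∀ s, Integrable (X s) μ := fun s =>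
    (hy_int (s + 1)).sub (integrable_condExp)
  have hι_sm : ∀ s, StronglyMeasurable[F (s + 1)] (ι (s + 1)) := fun s =>
    (hι_meas s).mono (F.mono (Nat.le_succ s))
  have hW_sm : ∀ t, StronglyMeasurable[F t] (W t) := by
    intro t
    apply (Real.continuous_exp.comp_stronglyMeasurable)
    apply StronglyMeasurable.sub
    · apply StronglyMeasurable.const_mul
      apply Finset.stronglyMeasurable_fun_sum
      intro s hs
      exact ((hι_sm s).mul (hX_sm s)).mono (F.mono (Finset.mem_range.mp hs))
    · apply StronglyMeasurable.const_mul
      apply Finset.stronglyMeasurable_fun_sum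
      intro s hs
      exact (hι_sm s).mono (F.mono (Finset.mem_range.mp hs))
  -- a.e. bounds
  set K : ℝ := |l| * max |m| |M| + c with hK
  have hK0 : 0 ≤ K := by positivity
  have hXb : ∀ᵐ ω ∂μ, ∀ s, X s ω ∈ Set.Icc m M := (ae_all_iff).2 hbound
  have hι01' : ∀ s ω, 0 ≤ ι (s + 1) ω ∧ ι (s + 1) ω ≤ 1 := by
    intro s ω; rcases hι_01 s ω with h | h <;> simp [h]
  have hterm : ∀ᵐ ω ∂μ, ∀ s, |l * (ι (s + 1) ω * X s ω) - c * ι (s + 1) ω| ≤ K := by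
    filter_upwards [hXb] with ω hω s
    have h1 : |X s ω| ≤ max |m| |M| := abs_le_max_abs_abs (hω s).1 (hω s).2
    have h2 := hι01' s ω
    have h3 : |ι (s + 1) ω| ≤ 1 := abs_le.2 ⟨by linarith [h2.1], h2.2⟩
    calc |l * (ι (s + 1) ω * X s ω) - c * ι (s + 1) ω|
        ≤ |l * (ι (s + 1) ω * X s ω)| + |c * ι (s + 1) ω| := abs_sub _ _
      _ = |l| * (|ι (s + 1) ω| * |X s ω|) + |c| * |ι (s + 1) ω| := by
          rw [abs_mul, abs_mul, abs_mul]
      _ ≤ |l| * (1 * max |m| |M|) + |c| * 1 := by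
          have h4 : |ι (s+1) ω| * |X s ω| ≤ 1 * max |m| |M| :=
            mul_le_mul h3 h1 (abs_nonneg _) zero_le_one
          have h5 : |c| * |ι (s+1) ω| ≤ |c| * 1 :=
            mul_le_mul_of_nonneg_left h3 (abs_nonneg c)
          have h6 := mul_le_mul_of_nonneg_left h4 (abs_nonneg l)
          linarith
      _ = K := by rw [hK, abs_of_nonneg hc0]; ring
  have hWb : ∀ t, ∀ᵐ ω ∂μ, W t ω ≤ Real.exp (t * K) := by
    intro t
    filter_upwards [hterm] with ω hω
    rw [hW, Real.exp_le_exp]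
    calc l * (∑ s ∈ Finset.range t, ι (s + 1) ω * X s ω)
          - c * (∑ s ∈ Finset.range t, ι (s + 1) ω)
        = ∑ s ∈ Finset.range t, (l * (ι (s + 1) ω * X s ω) - c * ι (s + 1) ω) := by
          rw [Finset.sum_sub_distrib, Finset.mul_sum, Finset.mul_sum]
      _ ≤ ∑ s ∈ Finset.range t, K := by
          apply Finset.sum_le_sum
          intro s _
          exact (le_abs_self _).trans (hω s)
      _ = t * K := by simp [mul_comm]
  have hW_int : ∀ t, Integrable (W t) μ := by
    intro t
    refine Integrable.mono' (integrable_const (Real.exp (t * K)))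
      (((hW_sm t).mono (F.le t)).aestronglyMeasurable) ?_
    filter_upwards [hWb t] with ω hω
    rwa [Real.norm_eq_abs, abs_of_pos (Real.exp_pos _)]
  -- induction
  suffices h : ∀ t, ∫ ω, W t ω ∂μ ≤ 1 by exact ⟨hW_int t, h t⟩
  intro t
  induction t with
  | zero => simp [hW]
  | succ t ih =>
    set g : Ω → ℝ := fun ω => Real.exp (l * (ι (t + 1) ω * X t ω) - c * ι (t + 1) ω) with hg
    have hWsucc : W (t + 1) = fun ω => W t ω * g ω := by
      funext ω
      simp only [hW, hg, Finset.sum_range_succ]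
      rw [← Real.exp_add]
      congr 1
      ring
    have hg_int : Integrable g μ := by
      have : W (t+1) = fun ω => W t ω * g ω := hWsucc
      refine Integrable.mono' (integrable_const (Real.exp K)) ?_ ?_
      · apply ((Real.continuous_exp.comp_stronglyMeasurable ?_).mono (F.le (t+1))).aestronglyMeasurable
        exact ((((hι_sm t).mul (hX_sm t)).const_mul l).sub ((hι_sm t).const_mul c))
      · filter_upwards [hterm] with ω hω
        rw [hg, Real.norm_eq_abs, abs_of_pos (Real.exp_pos _), Real.exp_le_exp]
        exact (le_abs_self _).trans (hω t)
    have hWg_int : Integrable (fun ω => W t ω * g ω) μ := hWsucc ▸ hW_int (t + 1)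
    -- conditional expectation of g is ≤ 1
    have hXcond : μ[X t|F t] =ᵐ[μ] 0 := by
      have h1 : μ[X t|F t] =ᵐ[μ] μ[y (t+1)|F t] - μ[μ[y (t+1)|F t]|F t] :=
        condExp_sub (hy_int (t+1)) integrable_condExp (F t)
      have h2 : μ[μ[y (t+1)|F t]|F t] =ᵐ[μ] μ[y (t+1)|F t] :=
        condExp_condExp_of_le le_rfl (F.le t)
      filter_upwards [h1, h2] with ω h1 h2
      simp only [Pi.sub_apply, Pi.zero_apply] at *
      rw [h1, h2]; ring
    have hEcond := cond_hoeff μ (F.le t) (hX_int t) hXcond m M l hm hM hlt (hbound t)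
    have hexp_int : Integrable (fun ω => Real.exp (l * X t ω)) μ := by
      refine Integrable.mono' (integrable_const (Real.exp (|l| * max |m| |M|))) ?_ ?_
      · exact (Real.continuous_exp.comp_stronglyMeasurable
          (((hX_sm t).const_mul l).mono (F.le (t+1)))).aestronglyMeasurable
      · filter_upwards [hbound t] with ω hω
        rw [Real.norm_eq_abs, abs_of_pos (Real.exp_pos _), Real.exp_le_exp]
        calc l * X t ω ≤ |l * X t ω| := le_abs_self _
          _ = |l| * |X t ω| := abs_mul _ _
          _ ≤ |l| * max |m| |M| :=
              mul_le_mul_of_nonneg_left (abs_le_max_abs_abs hω.1 hω.2) (abs_nonneg l)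
    have hg_eq : g = fun ω => (1 - ι (t + 1) ω)
        + Real.exp (-c) * (ι (t + 1) ω * Real.exp (l * X t ω)) := by
      funext ω
      rcases hι_01 t ω with h | h
      · simp [hg, h]
      · simp only [hg, h, sub_self, one_mul, mul_one, zero_add]
        rw [← Real.exp_add]
        ring_nf
    have hone_sub_int : Integrable (fun ω => 1 - ι (t + 1) ω) μ := by
      refine Integrable.mono' (integrable_const 1) ?_ ?_
      · exact (stronglyMeasurable_const.sub ((hι_meas t).mono (F.le t))).aestronglyMeasurable
      · refine Filter.Eventually.of_forall fun ω => ?_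
        have := hι01' t ω
        rw [Real.norm_eq_abs, abs_le]
        constructor <;> linarith [this.1, this.2]
    have hιexp_int : Integrable (fun ω => ι (t + 1) ω * Real.exp (l * X t ω)) μ := by
      refine Integrable.mono' (integrable_const (Real.exp (|l| * max |m| |M|))) ?_ ?_
      · exact ((((hι_sm t).mono (F.le (t+1))).mul
          ((Real.continuous_exp.comp_stronglyMeasurable
            (((hX_sm t).const_mul l))).mono (F.le (t+1))))).aestronglyMeasurable
      · filter_upwards [hbound t] with ω hω
        have h2 := hι01' t ω
        rw [Real.norm_eq_abs, abs_mul]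
        calc |ι (t+1) ω| * |Real.exp (l * X t ω)|
            ≤ 1 * Real.exp (|l| * max |m| |M|) := by
              apply mul_le_mul (abs_le.2 ⟨by linarith [h2.1], h2.2⟩)
              · rw [abs_of_pos (Real.exp_pos _), Real.exp_le_exp]
                calc l * X t ω ≤ |l * X t ω| := le_abs_self _
                  _ = |l| * |X t ω| := abs_mul _ _
                  _ ≤ |l| * max |m| |M| :=
                      mul_le_mul_of_nonneg_left (abs_le_max_abs_abs hω.1 hω.2) (abs_nonneg l)
              · exact abs_nonneg _
              · exact zero_le_one
          _ = _ := one_mul _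
    have hgcond : μ[g|F t] ≤ᵐ[μ] fun _ => 1 := by
      have e1 : μ[g|F t] =ᵐ[μ] μ[fun ω => 1 - ι (t + 1) ω|F t]
          + μ[fun ω => Real.exp (-c) * (ι (t + 1) ω * Real.exp (l * X t ω))|F t] := by
        rw [hg_eq]
        exact condExp_add hone_sub_int (hιexp_int.const_mul _) (F t)
      have e2 : μ[fun ω => 1 - ι (t + 1) ω|F t] =ᵐ[μ] fun ω => 1 - ι (t + 1) ω :=
        Filter.EventuallyEq.of_eq
          (condExp_of_stronglyMeasurable (F.le t)
            (stronglyMeasurable_const.sub (hι_meas t)) hone_sub_int)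
      have e3 : μ[fun ω => Real.exp (-c) * (ι (t + 1) ω * Real.exp (l * X t ω))|F t]
          =ᵐ[μ] fun ω => Real.exp (-c) * (μ[fun ω => ι (t + 1) ω * Real.exp (l * X t ω)|F t]) ω := by
        exact
          condExp_smul (μ := μ) (m := F t) (Real.exp (-c))
            (fun ω => ι (t + 1) ω * Real.exp (l * X t ω))
      have e4 : μ[fun ω => ι (t + 1) ω * Real.exp (l * X t ω)|F t]
          =ᵐ[μ] fun ω => ι (t + 1) ω * (μ[fun ω => Real.exp (l * X t ω)|F t]) ω :=
        condExp_mul_of_stronglyMeasurable_left (hι_meas t) hιexp_int hexp_int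
      filter_upwards [e1, e2, e3, e4, hEcond] with ω h1 h2 h3 h4 h5
      rw [h1]
      simp only [Pi.add_apply]
      rw [h2, h3, h4]
      have h2' := hι01' t ω
      have hE0 : ι (t+1) ω * (μ[fun ω => Real.exp (l * X t ω)|F t]) ω
          ≤ ι (t+1) ω * Real.exp (l ^ 2 * (M - m) ^ 2 / 8) :=
        mul_le_mul_of_nonneg_left h5 h2'.1
      have : Real.exp (-c) * (ι (t+1) ω * Real.exp (l ^ 2 * (M - m) ^ 2 / 8))
          = ι (t+1) ω := by
        rw [hc, mul_comm (Real.exp _), mul_assoc, ← Real.exp_add]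
        simp
      nlinarith [Real.exp_pos (-c), hE0, this]
    -- combine
    have hpull : μ[fun ω => W t ω * g ω|F t] =ᵐ[μ] fun ω => W t ω * (μ[g|F t]) ω :=
      condExp_mul_of_stronglyMeasurable_left (hW_sm t) hWg_int hg_int
    have hle : μ[fun ω => W t ω * g ω|F t] ≤ᵐ[μ] W t := by
      filter_upwards [hpull, hgcond] with ω h1 h2
      rw [h1]
      calc W t ω * (μ[g|F t]) ω ≤ W t ω * 1 :=
            mul_le_mul_of_nonneg_left h2 (Real.exp_pos _).le
        _ = W t ω := mul_one _
    calc ∫ ω, W (t + 1) ω ∂μ = ∫ ω, (μ[fun ω => W t ω * g ω|F t]) ω ∂μ := by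
          rw [hWsucc, integral_condExp (F.le t)]
      _ ≤ ∫ ω, W t ω ∂μ := integral_mono_ae integrable_condExp (hW_int t) hle
      _ ≤ 1 := ih
end Supermart

lemma markov_aux {Ω : Type*} {m0 : MeasurableSpace Ω} (μ : Measure Ω) [IsProbabilityMeasure μ]
    {W : Ω → ℝ} (hW_int : Integrable W μ) (hW0 : ∀ ω, 0 ≤ W ω)
    (hint : ∫ ω, W ω ∂μ ≤ 1) {B : Set Ω} (hB : MeasurableSet B) {α : ℝ} (hα : 0 < α)
    (hWB : ∀ ω ∈ B, 1 / α ≤ W ω) : μ B ≤ ENNReal.ofReal α := by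
  have h1 : ∫ ω in B, (1 / α) ∂μ ≤ ∫ ω in B, W ω ∂μ := by
    apply setIntegral_mono_on (integrableOn_const (measure_ne_top μ B))
      hW_int.integrableOn hB
    exact hWB
  have h2 : ∫ ω in B, W ω ∂μ ≤ ∫ ω, W ω ∂μ :=
    setIntegral_le_integral hW_int (Filter.Eventually.of_forall hW0)
  rw [setIntegral_const] at h1
  have h3 : (μ B).toReal * (1 / α) ≤ 1 := le_trans h1 (le_trans h2 hint)
  have h4 : (μ B).toReal ≤ α := by
    rw [mul_one_div, div_le_one hα] at h3
    linarith
  rwa [ENNReal.le_ofReal_iff_toReal_le (measure_ne_top μ B) hα.le]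

/-- Anytime Hoeffding bound for the optionally-sampled empirical mean: with probability at
least `1 - 2tα`, either no samples were collected or
`|μ̂_t| ≤ (M - m)√(log(1/α)/(2 N_t))`. -/
theorem stmt7 {Ω : Type*} {m0 : MeasurableSpace Ω} (μ : Measure Ω) [IsProbabilityMeasure μ]
    (F : Filtration ℕ m0) (y ι : ℕ → Ω → ℝ) (m M : ℝ)
    (hy_adapted : ∀ s : ℕ, StronglyMeasurable[F (s + 1)] (y (s + 1)))
    (hy_int : ∀ s : ℕ, Integrable (y s) μ)
    (hbound : ∀ s : ℕ, ∀ᵐ ω ∂μ,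
      y (s + 1) ω - (μ[y (s + 1)|F s]) ω ∈ Set.Icc m M)
    (hι_meas : ∀ s : ℕ, StronglyMeasurable[F s] (ι (s + 1)))
    (hι_01 : ∀ (s : ℕ) (ω : Ω), ι (s + 1) ω = 0 ∨ ι (s + 1) ω = 1)
    (t : ℕ) (α : ℝ) (hα : α ∈ Set.Ioo (0 : ℝ) 1) :
    1 - ENNReal.ofReal (2 * t * α)
      ≤ μ {ω | (∑ s ∈ Finset.range t, ι (s + 1) ω) = 0
          ∨ |(∑ s ∈ Finset.range t, ι (s + 1) ω * (y (s + 1) ω - (μ[y (s + 1)|F s]) ω))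
              / (∑ s ∈ Finset.range t, ι (s + 1) ω)|
            ≤ (M - m) * Real.sqrt (Real.log (1 / α)
                / (2 * (∑ s ∈ Finset.range t, ι (s + 1) ω)))} := by
  obtain ⟨hα0, hα1⟩ := hα
  set X : ℕ → Ω → ℝ := fun s ω => y (s + 1) ω - (μ[y (s + 1)|F s]) ω with hX
  set S : Ω → ℝ := fun ω => ∑ s ∈ Finset.range t, ι (s + 1) ω * X s ω with hS
  set N : Ω → ℝ := fun ω => ∑ s ∈ Finset.range t, ι (s + 1) ω with hN
  set E : Set Ω := {ω | N ω = 0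
      ∨ |S ω / N ω| ≤ (M - m) * Real.sqrt (Real.log (1 / α) / (2 * N ω))} with hE
  show 1 - ENNReal.ofReal (2 * t * α) ≤ μ E
  -- basic facts
  have hm : m ≤ 0 := by
    have h0 : ∫ ω, X 0 ω ∂μ = 0 := by
      rw [hX]
      rw [integral_sub (hy_int 1) integrable_condExp, integral_condExp (F.le 0), sub_self]
    have : ∫ ω, (m : ℝ) ∂μ ≤ ∫ ω, X 0 ω ∂μ := by
      apply integral_mono_ae (integrable_const m)
        ((hy_int 1).sub integrable_condExp)
      filter_upwards [hbound 0] with ω hω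
      exact hω.1
    rw [h0] at this
    simpa using this
  have hM : 0 ≤ M := by
    have h0 : ∫ ω, X 0 ω ∂μ = 0 := by
      rw [hX]
      rw [integral_sub (hy_int 1) integrable_condExp, integral_condExp (F.le 0), sub_self]
    have : ∫ ω, X 0 ω ∂μ ≤ ∫ ω, (M : ℝ) ∂μ := by
      apply integral_mono_ae ((hy_int 1).sub integrable_condExp) (integrable_const M)
      filter_upwards [hbound 0] with ω hω
      exact hω.2
    rw [h0] at this
    simpa using this
  rcases eq_or_lt_of_le (hm.trans hM) with heq | hlt
  · -- degenerate case m = M = 0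
    have hm0 : m = 0 := le_antisymm hm (heq ▸ hM)
    have hM0 : M = 0 := by rw [← heq, hm0]
    have hae : ∀ᵐ ω ∂μ, ω ∈ E := by
      have := (ae_all_iff).2 hbound
      filter_upwards [this] with ω hω
      have hszero : S ω = 0 := by
        rw [hS]
        apply Finset.sum_eq_zero
        intro s _
        have h1 := hω s
        rw [hm0, hM0] at h1
        have : X s ω = 0 := le_antisymm h1.2 h1.1
        rw [hX] at this ⊢
        simp [this]
      rw [hE]
      by_cases hNz : N ω = 0
      · exact Or.inl hNz
      · right
        rw [hszero, hM0, hm0]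
        simp
    have hcompl : μ Eᶜ = 0 := by
      simpa [Set.compl_def] using ae_iff.mp hae
    have h1le : 1 ≤ μ E := by
      calc (1 : ENNReal) = μ Set.univ := (measure_univ (μ := μ)).symm
        _ = μ (E ∪ Eᶜ) := by rw [Set.union_compl_self]
        _ ≤ μ E + μ Eᶜ := measure_union_le _ _
        _ = μ E := by rw [hcompl, add_zero]
    exact le_trans (tsub_le_self) h1le
  · -- main case m < M
    have hMm : 0 < M - m := sub_pos.2 hlt
    have hlog : 0 < Real.log (1 / α) := by
      apply Real.log_pos
      rw [lt_div_iff₀ hα0]; linarith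
    have hι_m : ∀ s, Measurable (ι (s + 1)) := fun s =>
      ((hι_meas s).mono (F.le s)).measurable
    have hN_meas : Measurable N := by
      rw [hN]; exact Finset.measurable_sum _ (fun s _ => hι_m s)
    have hX_m : ∀ s, Measurable (X s) := fun s => by
      rw [hX]
      exact (((hy_adapted s).mono (F.le (s+1))).measurable).sub
        ((stronglyMeasurable_condExp.mono (F.le s)).measurable)
    have hS_meas : Measurable S := by
      rw [hS]; exact Finset.measurable_sum _ (fun s _ => (hι_m s).mul (hX_m s))
    set c : ℕ → ℝ := fun k => (M - m) * Real.sqrt (k * Real.log (1 / α) / 2) with hc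
    set lam : ℕ → ℝ := fun k => 4 * c k / ((M - m) ^ 2 * k) with hlam
    have hck : ∀ k : ℕ, 1 ≤ k → 0 < c k := by
      intro k hk
      have hk0 : (0:ℝ) < k := by exact_mod_cast hk
      apply mul_pos hMm
      apply Real.sqrt_pos.2
      positivity
    have hlamk : ∀ k : ℕ, 1 ≤ k → 0 < lam k := by
      intro k hk
      have hk0 : (0:ℝ) < k := by exact_mod_cast hk
      have := hck k hk
      rw [hlam]
      positivity
    have hident : ∀ k : ℕ, 1 ≤ k →
        lam k * c k - (lam k) ^ 2 * (M - m) ^ 2 / 8 * k = Real.log (1 / α) := by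
      intro k hk
      have hk0 : (0:ℝ) < k := by exact_mod_cast hk
      have hc2 : c k ^ 2 = (M - m) ^ 2 * ((k:ℝ) * Real.log (1 / α) / 2) := by
        rw [hc, mul_pow, Real.sq_sqrt (by positivity)]
      have h1 : lam k * c k - (lam k) ^ 2 * (M - m) ^ 2 / 8 * (k:ℝ)
          = 2 * (c k) ^ 2 / ((M - m) ^ 2 * (k:ℝ)) := by
        rw [hlam]
        field_simp
        ring
      rw [h1, hc2]
      field_simp
    set Bp : ℕ → Set Ω := fun k => {ω | N ω = (k:ℝ) ∧ c k < S ω} with hBp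
    set Bm : ℕ → Set Ω := fun k => {ω | N ω = (k:ℝ) ∧ S ω < - c k} with hBm
    have hBp_meas : ∀ k, MeasurableSet (Bp k) := fun k =>
      (hN_meas (measurableSet_singleton _)).inter (measurableSet_lt measurable_const hS_meas)
    have hBm_meas : ∀ k, MeasurableSet (Bm k) := fun k =>
      (hN_meas (measurableSet_singleton _)).inter (measurableSet_lt hS_meas measurable_const)
    have hBp_bound : ∀ k : ℕ, 1 ≤ k → μ (Bp k) ≤ ENNReal.ofReal α := by
      intro k hk
      obtain ⟨hint, hle⟩ := supermart μ F y ι m M hy_adapted hy_int hbound hι_meas hι_01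
        hm hM hlt (lam k) t
      apply markov_aux μ hint (fun ω => (Real.exp_pos _).le) hle (hBp_meas k) hα0
      rintro ω ⟨hNk, hSc⟩
      rw [show (1:ℝ)/α = Real.exp (Real.log (1/α)) from (Real.exp_log (by positivity)).symm]
      apply Real.exp_le_exp.2
      show Real.log (1/α) ≤ lam k * S ω - (lam k) ^ 2 * (M - m) ^ 2 / 8 * N ω
      rw [hNk]
      have hid := hident k hk
      nlinarith [mul_le_mul_of_nonneg_left hSc.le (hlamk k hk).le]
    have hBm_bound : ∀ k : ℕ, 1 ≤ k → μ (Bm k) ≤ ENNReal.ofReal α := by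
      intro k hk
      obtain ⟨hint, hle⟩ := supermart μ F y ι m M hy_adapted hy_int hbound hι_meas hι_01
        hm hM hlt (-(lam k)) t
      apply markov_aux μ hint (fun ω => (Real.exp_pos _).le) hle (hBm_meas k) hα0
      rintro ω ⟨hNk, hSc⟩
      rw [show (1:ℝ)/α = Real.exp (Real.log (1/α)) from (Real.exp_log (by positivity)).symm]
      apply Real.exp_le_exp.2
      show Real.log (1/α) ≤ (-(lam k)) * S ω - (-(lam k)) ^ 2 * (M - m) ^ 2 / 8 * N ω
      rw [hNk]
      have hid := hident k hk
      have h2 : lam k * c k ≤ lam k * (- S ω) := by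
        apply mul_le_mul_of_nonneg_left _ (hlamk k hk).le
        linarith
      nlinarith [h2]
    have key01 : ∀ (n : ℕ) (ω : Ω), ∃ k : ℕ, k ≤ n ∧
        (∑ s ∈ Finset.range n, ι (s + 1) ω) = (k:ℝ) := by
      intro n ω
      induction n with
      | zero => exact ⟨0, le_refl 0, by simp⟩
      | succ n ih =>
        obtain ⟨k, hkn, hkeq⟩ := ih
        rcases hι_01 n ω with h | h
        · exact ⟨k, hkn.trans (Nat.le_succ n), by rw [Finset.sum_range_succ, h, add_zero, hkeq]⟩
        · refine ⟨k + 1, by omega, ?_⟩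
          rw [Finset.sum_range_succ, h, hkeq]
          push_cast
          ring
    have hsum01 : ∀ ω, ∃ k : ℕ, k ≤ t ∧ N ω = (k:ℝ) := fun ω => key01 t ω
    have hsubset : Eᶜ ⊆ ⋃ k ∈ Finset.Icc 1 t, (Bp k ∪ Bm k) := by
      intro ω hω
      simp only [hE, Set.mem_compl_iff, Set.mem_setOf_eq] at hω
      push_neg at hω
      obtain ⟨hN0, hgt⟩ := hω
      obtain ⟨k, hkt, hNk⟩ := hsum01 ω
      have hk1 : 1 ≤ k := by
        rcases Nat.eq_zero_or_pos k with h | h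
        · exact absurd (by rw [hNk, h]; simp) hN0
        · exact h
      have hk0 : (0:ℝ) < k := by exact_mod_cast hk1
      have habs : c k < |S ω| := by
        rw [hNk, abs_div, abs_of_pos hk0, lt_div_iff₀ hk0] at hgt
        have hsq : Real.sqrt ((k:ℝ) * Real.log (1/α) / 2)
            = (k:ℝ) * Real.sqrt (Real.log (1/α) / (2 * (k:ℝ))) := by
          rw [show (k:ℝ) * Real.log (1/α) / 2
              = (k:ℝ)^2 * (Real.log (1/α) / (2 * (k:ℝ))) by field_simp,
            Real.sqrt_mul (sq_nonneg _), Real.sqrt_sq hk0.le]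
        calc c k = (M - m) * Real.sqrt (Real.log (1/α) / (2 * (k:ℝ))) * (k:ℝ) := by
              simp only [hc]; rw [hsq]; ring
          _ < |S ω| := hgt
      rw [Set.mem_iUnion₂]
      refine ⟨k, Finset.mem_Icc.2 ⟨hk1, hkt⟩, ?_⟩
      rcases lt_abs.1 habs with h | h
      · exact Or.inl ⟨hNk, h⟩
      · exact Or.inr ⟨hNk, by linarith⟩
    have hcompl_bound : μ Eᶜ ≤ ENNReal.ofReal (2 * t * α) := by
      calc μ Eᶜ ≤ μ (⋃ k ∈ Finset.Icc 1 t, (Bp k ∪ Bm k)) := measure_mono hsubset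
        _ ≤ ∑ k ∈ Finset.Icc 1 t, μ (Bp k ∪ Bm k) := measure_biUnion_finset_le _ _
        _ ≤ ∑ _k ∈ Finset.Icc 1 t, (ENNReal.ofReal α + ENNReal.ofReal α) := by
            apply Finset.sum_le_sum
            intro k hk
            obtain ⟨hk1, _⟩ := Finset.mem_Icc.1 hk
            calc μ (Bp k ∪ Bm k) ≤ μ (Bp k) + μ (Bm k) := measure_union_le _ _
              _ ≤ _ := add_le_add (hBp_bound k hk1) (hBm_bound k hk1)
        _ = ENNReal.ofReal (2 * t * α) := by
            rw [Finset.sum_const, Nat.card_Icc, Nat.add_sub_cancel, nsmul_eq_mul,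
              ← ENNReal.ofReal_add hα0.le hα0.le,
              ← ENNReal.ofReal_natCast t, ← ENNReal.ofReal_mul (by positivity)]
            congr 1
            ring
    have h2 : 1 - μ Eᶜ ≤ μ E := by
      rw [tsub_le_iff_right]
      calc (1:ENNReal) = μ (E ∪ Eᶜ) := by rw [Set.union_compl_self, measure_univ]
        _ ≤ μ E + μ Eᶜ := measure_union_le _ _
    exact le_trans (tsub_le_tsub_left hcompl_bound 1) h2
end
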